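/- Assume m0, m1, m2 are not collinear, and set u = m1 − m0, v = m2 − m0, w = v − u, d10 = ‖u‖, d20 = ‖v‖, d21 = ‖w‖. Define a(t₁, t₂) = ‖t₂·u − t₁·v‖² − det(u, v)², where det(u, v) is the 2×2 determinant. Then: (i) every t ∈ ℝ² with a(t) = 0 satisfies t ∈ P₂; (ii) for each ε ∈ {1, −1}: {t : a(t) = 0 and t₁ = ε·d10} = {ε·T₂⁺}, {t : a(t) = 0 and t₂ = ε·d20} = {ε·T₁⁺}, and {t : a(t) = 0 and t₂ − t₁ = ε·d21} = {ε·T₀⁺}, where T₂⁺ = (d10, ⟨v, u⟩/d10), T₁⁺ = (⟨u, v⟩/d20, d20), T₀⁺ = (⟨u, w⟩/d21, ⟨v, w⟩/d21). In other words, the ellipse E = {a = 0} is inscribed in the hexagon P₂ and touches each of its six side-lines in exactly one point. -/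

import Mathlib

lemma normsq2 (x : EuclideanSpace ℝ (Fin 2)) : ‖x‖^2 = x 0 ^2 + x 1 ^2 := by
  rw [EuclideanSpace.norm_eq, Real.sq_sqrt (by positivity)]
  simp [Fin.sum_univ_two, sq_abs]

lemma inner2 (x y : EuclideanSpace ℝ (Fin 2)) : (inner ℝ x y : ℝ) = x 0 * y 0 + x 1 * y 1 := by
  simp [PiLp.inner_apply, Fin.sum_univ_two, RCLike.inner_apply]
  ring

lemma dep2 (x y : EuclideanSpace ℝ (Fin 2)) (hx : ¬ (x 0 = 0 ∧ x 1 = 0))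
    (h : x 0 * y 1 - x 1 * y 0 = 0) : ∃ c : ℝ, y = c • x := by
  by_cases h1 : x 0 = 0
  · have h2 : x 1 ≠ 0 := fun hh => hx ⟨h1, hh⟩
    have hy0 : y 0 = 0 := by
      have : x 1 * y 0 = 0 := by rw [h1] at h; linarith
      rcases mul_eq_zero.mp this with h' | h'
      · exact absurd h' h2
      · exact h'
    refine ⟨y 1 / x 1, ?_⟩
    ext i; fin_cases i
    · simp [h1, hy0]
    · simp; field_simp
  · refine ⟨y 0 / x 0, ?_⟩
    ext i; fin_cases i
    · simp; field_simp
    · simp; field_simp; nlinarith [h]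

lemma colll (m0 m1 m2 : EuclideanSpace ℝ (Fin 2))
    (u v : EuclideanSpace ℝ (Fin 2)) (hu : u = m1 - m0) (hv : v = m2 - m0)
    (h : u 0 * v 1 - u 1 * v 0 = 0) :
    Collinear ℝ ({m0, m1, m2} : Set (EuclideanSpace ℝ (Fin 2))) := by
  rw [collinear_iff_of_mem (Set.mem_insert m0 _)]
  by_cases h0 : u 0 = 0 ∧ u 1 = 0
  · have hu0 : u = 0 := by ext i; fin_cases i <;> simp [h0.1, h0.2]
    have hm : m1 = m0 := by rw [hu] at hu0; rwa [sub_eq_zero] at hu0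
    refine ⟨v, ?_⟩
    intro p hp
    simp only [Set.mem_insert_iff, Set.mem_singleton_iff] at hp
    rcases hp with rfl | rfl | rfl
    · exact ⟨0, by simp⟩
    · exact ⟨0, by simp [hm]⟩
    · exact ⟨1, by simp [hv]⟩
  · obtain ⟨c, hc⟩ := dep2 u v h0 h
    refine ⟨u, ?_⟩
    intro p hp
    simp only [Set.mem_insert_iff, Set.mem_singleton_iff] at hp
    rcases hp with rfl | rfl | rfl
    · exact ⟨0, by simp⟩
    · exact ⟨1, by simp [hu]⟩
    · exact ⟨c, by rw [← hc, hv]; simp⟩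

lemma keyBound (A B C D t1 t2 : ℝ) (hL : A*B - C^2 = D^2) (hD : D ≠ 0)
    (hQ : B*t1^2 - 2*C*t1*t2 + A*t2^2 = D^2) : t1^2 ≤ A := by
  have hD2 : 0 < D^2 := by positivity
  nlinarith [sq_nonneg (A*t2 - C*t1), hQ, hL, hD2]

lemma keyTangent (A B C D t1 t2 : ℝ) (hL : A*B - C^2 = D^2)
    (hQ : B*t1^2 - 2*C*t1*t2 + A*t2^2 = D^2) (ht : t1^2 = A) : A*t2 = C*t1 := by
  have : (A*t2 - C*t1)^2 = 0 := by nlinarith [hQ, hL, ht]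
  have := pow_eq_zero_iff (n := 2) (by norm_num) |>.mp this
  linarith

lemma absBound (x d : ℝ) (hd : 0 < d) (h : x^2 ≤ d^2) : |x| ≤ d := by
  rw [abs_le]; constructor <;> nlinarith

lemma coordT (A C d t ε : ℝ) (hd : d ≠ 0) (hdsq : d^2 = A) (hk : A * t = C * (ε * d)) :
    t = ε * (C / d) := by
  rw [show ε * (C/d) = (ε*C)/d by ring, eq_div_iff hd]
  apply mul_left_cancel₀ hd
  linear_combination hk + t*hdsq

lemma side1bwd (p q r s d ε c : ℝ) (hε : ε^2 = 1) (hdsq : d^2 = p^2+q^2)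
    (hc : c * d = p*r+q*s) :
    (r^2+s^2)*(ε*d)^2 - 2*(p*r+q*s)*(ε*d)*(ε*c)
      + (p^2+q^2)*(ε*c)^2 - (p*s-q*r)^2 = 0 := by
  linear_combination (p*s-q*r)^2*hε + ε^2*(r^2+s^2-c^2)*hdsq
    + ε^2*(c*d - (p*r+q*s))*hc + ε^2*2*(p*r+q*s)*hc - ε^2*2*(p*r+q*s)*hc

lemma side2bwd (p q r s d ε c : ℝ) (hε : ε^2 = 1) (hdsq : d^2 = r^2+s^2)
    (hc : c * d = p*r+q*s) :
    (r^2+s^2)*(ε*c)^2 - 2*(p*r+q*s)*(ε*c)*(ε*d)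
      + (p^2+q^2)*(ε*d)^2 - (p*s-q*r)^2 = 0 := by
  linear_combination (p*s-q*r)^2*hε + ε^2*(p^2+q^2-c^2)*hdsq
    + ε^2*(c*d - (p*r+q*s))*hc + ε^2*2*(p*r+q*s)*hc - ε^2*2*(p*r+q*s)*hc

lemma side0bwd (p q r s d ε c1 c2 : ℝ) (hd : d ≠ 0) (hε : ε^2 = 1)
    (hdsq : d^2 = (r-p)^2 + (s-q)^2)
    (hc1 : c1 * d = p*(r-p)+q*(s-q)) (hc2 : c2 * d = r*(r-p)+s*(s-q)) :
    (r^2+s^2)*(ε*c1)^2 - 2*(p*r+q*s)*(ε*c1)*(ε*c2)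
      + (p^2+q^2)*(ε*c2)^2 - (p*s-q*r)^2 = 0 := by
  have h : d^2 * ((r^2+s^2)*(ε*c1)^2 - 2*(p*r+q*s)*(ε*c1)*(ε*c2)
      + (p^2+q^2)*(ε*c2)^2 - (p*s-q*r)^2) = 0 := by
    linear_combination ((p*s-q*r)^2*((r-p)^2+(s-q)^2))*hε - (p*s-q*r)^2*hdsq
      + (ε^2*((r^2+s^2)*((p*(r-p)+q*(s-q)) + c1*d) - 2*(p*r+q*s)*(c2*d)))*hc1
      + (ε^2*(-2*(p*r+q*s)*(p*(r-p)+q*(s-q)) + (p^2+q^2)*((r*(r-p)+s*(s-q)) + c2*d)))*hc2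
  rcases mul_eq_zero.mp h with h' | h'
  · exact absurd h' (pow_ne_zero 2 hd)
  · exact h'

lemma sumT (Cw Aw d ε : ℝ) (hd : d ≠ 0) (hdsq : d^2 = Aw) :
    ε*(Cw/d) + ε*d = ε*((Cw+Aw)/d) := by
  rw [show ε*(Cw/d) = (ε*Cw)/d by ring, show ε*((Cw+Aw)/d) = (ε*(Cw+Aw))/d by ring,
    div_add' _ _ _ hd, div_eq_div_iff hd hd]
  linear_combination ε*d*hdsq

lemma diffT (Cw Aw d ε : ℝ) (hd : d ≠ 0) (hdsq : d^2 = Aw) :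
    ε*((Cw+Aw)/d) - ε*(Cw/d) = ε*d := by
  rw [show ε*(Cw/d) = (ε*Cw)/d by ring, show ε*((Cw+Aw)/d) = (ε*(Cw+Aw))/d by ring,
    div_sub_div_same, div_eq_iff hd]
  linear_combination -ε*hdsq

lemma sqsum_zero {x y : ℝ} (h : 0 = x^2 + y^2) : x = 0 ∧ y = 0 := by
  have hx : x^2 = 0 := by linarith [sq_nonneg x, sq_nonneg y]
  have hy : y^2 = 0 := by linarith [sq_nonneg x, sq_nonneg y]
  exact ⟨pow_eq_zero_iff (n := 2) (by norm_num) |>.mp hx,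
    pow_eq_zero_iff (n := 2) (by norm_num) |>.mp hy⟩

lemma pos_of_sq {d A : ℝ} (hn : 0 ≤ d) (h : d^2 = A) (hA : 0 < A) : 0 < d := by
  rcases lt_or_eq_of_le hn with h' | h'
  · exact h'
  · exfalso; rw [← h'] at h; simp at h; rw [← h] at hA; exact lt_irrefl 0 hA

set_option maxHeartbeats 1000000 in
theorem stmt9 (m0 m1 m2 : EuclideanSpace ℝ (Fin 2))
    (hnc : ¬ Collinear ℝ ({m0, m1, m2} : Set (EuclideanSpace ℝ (Fin 2))))
    (u v w : EuclideanSpace ℝ (Fin 2)) (hu : u = m1 - m0) (hv : v = m2 - m0) (hw : w = v - u)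
    (d10 d20 d21 : ℝ) (hd10 : d10 = ‖u‖) (hd20 : d20 = ‖v‖) (hd21 : d21 = ‖w‖)
    (a : ℝ × ℝ → ℝ)
    (ha : ∀ t : ℝ × ℝ, a t = ‖t.2 • u - t.1 • v‖ ^ 2 - (u 0 * v 1 - u 1 * v 0) ^ 2)
    (P2 : Set (ℝ × ℝ))
    (hP2 : P2 = {t : ℝ × ℝ | |t.1| ≤ d10 ∧ |t.2| ≤ d20 ∧ |t.2 - t.1| ≤ d21})
    (T2p T1p T0p : ℝ × ℝ)
    (hT2 : T2p = (d10, (inner ℝ v u : ℝ) / d10))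
    (hT1 : T1p = ((inner ℝ u v : ℝ) / d20, d20))
    (hT0 : T0p = ((inner ℝ u w : ℝ) / d21, (inner ℝ v w : ℝ) / d21)) :
    (∀ t : ℝ × ℝ, a t = 0 → t ∈ P2) ∧
    (∀ ε : ℝ, ε = 1 ∨ ε = -1 →
      ({t : ℝ × ℝ | a t = 0 ∧ t.1 = ε * d10} = {ε • T2p}) ∧
      ({t : ℝ × ℝ | a t = 0 ∧ t.2 = ε * d20} = {ε • T1p}) ∧
      ({t : ℝ × ℝ | a t = 0 ∧ t.2 - t.1 = ε * d21} = {ε • T0p})) := by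
  have hw0 : w 0 = v 0 - u 0 := by rw [hw]; simp
  have hw1 : w 1 = v 1 - u 1 := by rw [hw]; simp
  have hD : u 0 * v 1 - u 1 * v 0 ≠ 0 := fun h => hnc (colll m0 m1 m2 u v hu hv h)
  have hnu : ‖u‖^2 = u 0 ^2 + u 1 ^2 := normsq2 u
  have hnv : ‖v‖^2 = v 0 ^2 + v 1 ^2 := normsq2 v
  have hnw : ‖w‖^2 = (v 0 - u 0)^2 + (v 1 - u 1)^2 := by rw [normsq2, hw0, hw1]
  have hd10sq : d10^2 = u 0 ^2 + u 1 ^2 := by rw [hd10, hnu]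
  have hd20sq : d20^2 = v 0 ^2 + v 1 ^2 := by rw [hd20, hnv]
  have hd21sq : d21^2 = (v 0 - u 0)^2 + (v 1 - u 1)^2 := by rw [hd21, hnw]
  have hApos : 0 < u 0 ^2 + u 1 ^2 := by
    rcases lt_or_eq_of_le (by positivity : (0:ℝ) ≤ u 0 ^2 + u 1 ^2) with h | h
    · exact h
    · exfalso; apply hD
      obtain ⟨h1, h2⟩ := sqsum_zero h
      rw [h1, h2]; ring
  have hBpos : 0 < v 0 ^2 + v 1 ^2 := by
    rcases lt_or_eq_of_le (by positivity : (0:ℝ) ≤ v 0 ^2 + v 1 ^2) with h | h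
    · exact h
    · exfalso; apply hD
      obtain ⟨h1, h2⟩ := sqsum_zero h
      rw [h1, h2]; ring
  have hWpos : 0 < (v 0 - u 0)^2 + (v 1 - u 1)^2 := by
    rcases lt_or_eq_of_le (by positivity : (0:ℝ) ≤ (v 0 - u 0)^2 + (v 1 - u 1)^2) with h | h
    · exact h
    · exfalso; apply hD
      obtain ⟨h1, h2⟩ := sqsum_zero h
      have hv0 : v 0 = u 0 := by linarith
      have hv1 : v 1 = u 1 := by linarith
      rw [hv0, hv1]; ring
  have hd10pos : 0 < d10 :=
    pos_of_sq (by rw [hd10]; exact norm_nonneg u) hd10sq hApos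
  have hd20pos : 0 < d20 :=
    pos_of_sq (by rw [hd20]; exact norm_nonneg v) hd20sq hBpos
  have hd21pos : 0 < d21 :=
    pos_of_sq (by rw [hd21]; exact norm_nonneg w) hd21sq hWpos
  have haQ : ∀ t : ℝ × ℝ, a t = (v 0 ^2 + v 1 ^2)*t.1^2 - 2*(u 0 * v 0 + u 1 * v 1)*t.1*t.2
      + (u 0 ^2 + u 1 ^2)*t.2^2 - (u 0 * v 1 - u 1 * v 0)^2 := by
    intro t
    rw [ha, normsq2]
    have h0 : (t.2 • u - t.1 • v) 0 = t.2 * u 0 - t.1 * v 0 := by simp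
    have h1 : (t.2 • u - t.1 • v) 1 = t.2 * u 1 - t.1 * v 1 := by simp
    rw [h0, h1]; ring
  have hL : (u 0 ^2 + u 1 ^2)*(v 0 ^2 + v 1 ^2) - (u 0 * v 0 + u 1 * v 1)^2
      = (u 0 * v 1 - u 1 * v 0)^2 := by ring
  have hLw : ((v 0 - u 0)^2 + (v 1 - u 1)^2)*(u 0 ^2 + u 1 ^2)
      - (u 0 * (v 0 - u 0) + u 1 * (v 1 - u 1))^2 = (u 0 * v 1 - u 1 * v 0)^2 := by ring
  have part1 : ∀ t : ℝ × ℝ, a t = 0 → t ∈ P2 := by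
    intro t ht
    rw [haQ] at ht
    have hQ : (v 0 ^2 + v 1 ^2)*t.1^2 - 2*(u 0 * v 0 + u 1 * v 1)*t.1*t.2
        + (u 0 ^2 + u 1 ^2)*t.2^2 = (u 0 * v 1 - u 1 * v 0)^2 := by linarith
    rw [hP2]
    refine ⟨?_, ?_, ?_⟩
    · have h := keyBound (u 0 ^2 + u 1 ^2) (v 0 ^2 + v 1 ^2) (u 0 * v 0 + u 1 * v 1)
        (u 0 * v 1 - u 1 * v 0) t.1 t.2 hL hD hQ
      exact absBound _ _ hd10pos (by rw [hd10sq]; exact h)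
    · have h := keyBound (v 0 ^2 + v 1 ^2) (u 0 ^2 + u 1 ^2) (u 0 * v 0 + u 1 * v 1)
        (u 0 * v 1 - u 1 * v 0) t.2 t.1 (by linarith [hL]) hD (by linarith [hQ])
      exact absBound _ _ hd20pos (by rw [hd20sq]; exact h)
    · have hQ' : (u 0 ^2 + u 1 ^2)*(t.2 - t.1)^2
          - 2*(u 0 * (v 0 - u 0) + u 1 * (v 1 - u 1))*(t.2 - t.1)*t.1
          + ((v 0 - u 0)^2 + (v 1 - u 1)^2)*t.1^2 = (u 0 * v 1 - u 1 * v 0)^2 := by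
        linear_combination hQ
      have h := keyBound ((v 0 - u 0)^2 + (v 1 - u 1)^2) (u 0 ^2 + u 1 ^2)
        (u 0 * (v 0 - u 0) + u 1 * (v 1 - u 1)) (u 0 * v 1 - u 1 * v 0) (t.2 - t.1) t.1
        hLw hD hQ'
      exact absBound _ _ hd21pos (by rw [hd21sq]; exact h)
  refine ⟨part1, ?_⟩
  intro ε hε
  have hε2 : ε^2 = 1 := by rcases hε with rfl | rfl <;> norm_num
  have hiuv : (inner ℝ u v : ℝ) = u 0 * v 0 + u 1 * v 1 := inner2 u v
  have hivu : (inner ℝ v u : ℝ) = u 0 * v 0 + u 1 * v 1 := by rw [inner2]; ring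
  have hiuw : (inner ℝ u w : ℝ) = u 0 * (v 0 - u 0) + u 1 * (v 1 - u 1) := by
    rw [inner2, hw0, hw1]
  have hivw : (inner ℝ v w : ℝ) = v 0 * (v 0 - u 0) + v 1 * (v 1 - u 1) := by
    rw [inner2, hw0, hw1]
  refine ⟨?_, ?_, ?_⟩
  · ext t
    simp only [Set.mem_setOf_eq, Set.mem_singleton_iff, hT2, Prod.smul_mk, smul_eq_mul,
      Prod.ext_iff]
    constructor
    · rintro ⟨hat, ht1⟩
      refine ⟨ht1, ?_⟩
      rw [haQ] at hat
      have hQ : (v 0 ^2 + v 1 ^2)*t.1^2 - 2*(u 0 * v 0 + u 1 * v 1)*t.1*t.2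
          + (u 0 ^2 + u 1 ^2)*t.2^2 = (u 0 * v 1 - u 1 * v 0)^2 := by linarith
      have htsq : t.1^2 = u 0 ^2 + u 1 ^2 := by
        rw [ht1, ← hd10sq, mul_pow, hε2, one_mul]
      have hk := keyTangent (u 0 ^2 + u 1 ^2) (v 0 ^2 + v 1 ^2) (u 0 * v 0 + u 1 * v 1)
        (u 0 * v 1 - u 1 * v 0) t.1 t.2 hL hQ htsq
      rw [ht1] at hk
      rw [hivu]
      exact coordT _ _ _ _ _ (ne_of_gt hd10pos) hd10sq hk
    · rintro ⟨h1, h2⟩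
      refine ⟨?_, h1⟩
      rw [haQ, h1, h2, hivu]
      linear_combination side1bwd (u 0) (u 1) (v 0) (v 1) d10 ε
        ((u 0 * v 0 + u 1 * v 1)/d10) hε2 hd10sq
        (div_mul_cancel₀ _ (ne_of_gt hd10pos))
  · ext t
    simp only [Set.mem_setOf_eq, Set.mem_singleton_iff, hT1, Prod.smul_mk, smul_eq_mul,
      Prod.ext_iff]
    constructor
    · rintro ⟨hat, ht2⟩
      refine ⟨?_, ht2⟩
      rw [haQ] at hat
      have hQ : (u 0 ^2 + u 1 ^2)*t.2^2 - 2*(u 0 * v 0 + u 1 * v 1)*t.2*t.1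
          + (v 0 ^2 + v 1 ^2)*t.1^2 = (u 0 * v 1 - u 1 * v 0)^2 := by linarith
      have htsq : t.2^2 = v 0 ^2 + v 1 ^2 := by
        rw [ht2, ← hd20sq, mul_pow, hε2, one_mul]
      have hk := keyTangent (v 0 ^2 + v 1 ^2) (u 0 ^2 + u 1 ^2) (u 0 * v 0 + u 1 * v 1)
        (u 0 * v 1 - u 1 * v 0) t.2 t.1 (by linarith [hL]) hQ htsq
      rw [ht2] at hk
      rw [hiuv]
      exact coordT _ _ _ _ _ (ne_of_gt hd20pos) hd20sq hk
    · rintro ⟨h1, h2⟩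
      refine ⟨?_, h2⟩
      rw [haQ, h1, h2, hiuv]
      linear_combination side2bwd (u 0) (u 1) (v 0) (v 1) d20 ε
        ((u 0 * v 0 + u 1 * v 1)/d20) hε2 hd20sq
        (div_mul_cancel₀ _ (ne_of_gt hd20pos))
  · ext t
    simp only [Set.mem_setOf_eq, Set.mem_singleton_iff, hT0, Prod.smul_mk, smul_eq_mul,
      Prod.ext_iff]
    constructor
    · rintro ⟨hat, hts⟩
      rw [haQ] at hat
      have hQ : (v 0 ^2 + v 1 ^2)*t.1^2 - 2*(u 0 * v 0 + u 1 * v 1)*t.1*t.2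
          + (u 0 ^2 + u 1 ^2)*t.2^2 = (u 0 * v 1 - u 1 * v 0)^2 := by linarith
      have hQ' : (u 0 ^2 + u 1 ^2)*(t.2 - t.1)^2
          - 2*(u 0 * (v 0 - u 0) + u 1 * (v 1 - u 1))*(t.2 - t.1)*t.1
          + ((v 0 - u 0)^2 + (v 1 - u 1)^2)*t.1^2 = (u 0 * v 1 - u 1 * v 0)^2 := by
        linear_combination hQ
      have htsq : (t.2 - t.1)^2 = (v 0 - u 0)^2 + (v 1 - u 1)^2 := by
        rw [hts, ← hd21sq, mul_pow, hε2, one_mul]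
      have hk := keyTangent ((v 0 - u 0)^2 + (v 1 - u 1)^2) (u 0 ^2 + u 1 ^2)
        (u 0 * (v 0 - u 0) + u 1 * (v 1 - u 1)) (u 0 * v 1 - u 1 * v 0) (t.2 - t.1) t.1
        hLw hQ' htsq
      rw [hts] at hk
      have h1 : t.1 = ε * ((u 0 * (v 0 - u 0) + u 1 * (v 1 - u 1)) / d21) :=
        coordT _ _ _ _ _ (ne_of_gt hd21pos) hd21sq hk
      refine ⟨by rw [hiuw]; exact h1, ?_⟩
      rw [hivw]
      have h2 : t.2 = t.1 + ε * d21 := by linarith [hts]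
      rw [h2, h1]
      linear_combination sumT (u 0 * (v 0 - u 0) + u 1 * (v 1 - u 1))
        ((v 0 - u 0)^2 + (v 1 - u 1)^2) d21 ε (ne_of_gt hd21pos) hd21sq
    · rintro ⟨h1, h2⟩
      rw [hiuw] at h1; rw [hivw] at h2
      constructor
      · rw [haQ, h1, h2]
        linear_combination side0bwd (u 0) (u 1) (v 0) (v 1) d21 ε
          ((u 0 * (v 0 - u 0) + u 1 * (v 1 - u 1))/d21)
          ((v 0 * (v 0 - u 0) + v 1 * (v 1 - u 1))/d21)
          (ne_of_gt hd21pos) hε2 hd21sq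
          (div_mul_cancel₀ _ (ne_of_gt hd21pos)) (div_mul_cancel₀ _ (ne_of_gt hd21pos))
      · rw [h1, h2]
        linear_combination diffT (u 0 * (v 0 - u 0) + u 1 * (v 1 - u 1))
          ((v 0 - u 0)^2 + (v 1 - u 1)^2) d21 ε (ne_of_gt hd21pos) hd21sq
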